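/- Let 𝔅 be an atomic Boolean subspace lattice. If K is an atom of 𝔅 then K₋ = K' = ⋁{L ∈ 𝔅ₐ : L ≠ K}; and if M ∈ 𝔅 is nonzero and not an atom, then M₋ = X. -/

import Mathlib

open ContinuousLinearMap

/-- The closed linear span (join) of a family of subspaces. -/
noncomputable def cJoin {X : Type*} [NormedAddCommGroup X] [NormedSpace ℂ X]
    (S : Set (Submodule ℂ X)) : Submodule ℂ X :=
  (sSup S).topologicalClosure

/-- Join of two subspaces in the lattice of closed subspaces. -/
noncomputable def cJoin2 {X : Type*} [NormedAddCommGroup X] [NormedSpace ℂ X]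
    (M N : Submodule ℂ X) : Submodule ℂ X :=
  (M ⊔ N).topologicalClosure

/-- A subspace lattice: a complete lattice of closed subspaces containing the trivial ones. -/
def IsSubspaceLattice {X : Type*} [NormedAddCommGroup X] [NormedSpace ℂ X]
    (L : Set (Submodule ℂ X)) : Prop :=
  (∀ M ∈ L, IsClosed (M : Set X)) ∧ ⊥ ∈ L ∧ ⊤ ∈ L ∧
    ∀ S ⊆ L, cJoin S ∈ L ∧ sInf S ∈ L

/-- Alg(F): bounded operators leaving every member of F invariant. -/
def algOf {X : Type*} [NormedAddCommGroup X] [NormedSpace ℂ X]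
    (L : Set (Submodule ℂ X)) : Set (X →L[ℂ] X) :=
  {A | ∀ M ∈ L, ∀ x ∈ M, A x ∈ M}

/-- Lat(T): closed subspaces invariant under every operator in T. -/
def latOf {X : Type*} [NormedAddCommGroup X] [NormedSpace ℂ X]
    (T : Set (X →L[ℂ] X)) : Set (Submodule ℂ X) :=
  {M | IsClosed (M : Set X) ∧ ∀ A ∈ T, ∀ x ∈ M, A x ∈ M}

/-- The rank-one operator e ⊗ η : x ↦ η(x) • e. -/
noncomputable def rankOne {X : Type*} [NormedAddCommGroup X] [NormedSpace ℂ X]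
    (e : X) (η : X →L[ℂ] ℂ) : X →L[ℂ] X :=
  η.smulRight e

/-- The rank-one operators in a set of operators. -/
noncomputable def Rk1 {X : Type*} [NormedAddCommGroup X] [NormedSpace ℂ X]
    (T : Set (X →L[ℂ] X)) : Set (X →L[ℂ] X) :=
  {A ∈ T | ∃ (e : X) (η : X →L[ℂ] ℂ), e ≠ 0 ∧ η ≠ 0 ∧ A = rankOne e η}

/-- M₋ = ⋁{K ∈ L : M ⊄ K}. -/
noncomputable def mMinus {X : Type*} [NormedAddCommGroup X] [NormedSpace ℂ X]
    (L : Set (Submodule ℂ X)) (M : Submodule ℂ X) : Submodule ℂ X :=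
  cJoin {K | K ∈ L ∧ ¬ M ≤ K}

/-- M₊ = ⋀{K ∈ L : K ⊄ M}. -/
noncomputable def mPlus {X : Type*} [NormedAddCommGroup X] [NormedSpace ℂ X]
    (L : Set (Submodule ℂ X)) (M : Submodule ℂ X) : Submodule ℂ X :=
  sInf {K | K ∈ L ∧ ¬ K ≤ M}

/-- N_* = ⋀{M₋ : M ∈ L, M ⊄ N}. -/
noncomputable def nStar {X : Type*} [NormedAddCommGroup X] [NormedSpace ℂ X]
    (L : Set (Submodule ℂ X)) (N : Submodule ℂ X) : Submodule ℂ X :=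
  sInf {P | ∃ M, M ∈ L ∧ ¬ M ≤ N ∧ P = mMinus L M}

/-- The cyclic subspace [Alg(L)x]: closed linear span of the orbit of x under Alg(L). -/
noncomputable def cyclicSubspace {X : Type*} [NormedAddCommGroup X] [NormedSpace ℂ X]
    (L : Set (Submodule ℂ X)) (x : X) : Submodule ℂ X :=
  (Submodule.span ℂ ((fun A : X →L[ℂ] X => A x) '' algOf L)).topologicalClosure

/-- The pinch points of a family of subspaces. -/
def pinOf {X : Type*} [NormedAddCommGroup X] [NormedSpace ℂ X]
    (L : Set (Submodule ℂ X)) : Set (Submodule ℂ X) :=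
  {P | P ∈ L ∧ ∀ M ∈ L, M ≤ P ∨ P ≤ M}


/-- An atom of a subspace lattice: a nontrivial minimal element. -/
def IsLatAtom {X : Type*} [NormedAddCommGroup X] [NormedSpace ℂ X]
    (L : Set (Submodule ℂ X)) (K : Submodule ℂ X) : Prop :=
  K ∈ L ∧ K ≠ ⊥ ∧ K ≠ ⊤ ∧ ∀ B ∈ L, B ≤ K → B = ⊥ ∨ B = K

/-- A Boolean subspace lattice with complementation map `c`: distributive and
(uniquely) complemented. -/
def IsBooleanSubspaceLattice {X : Type*} [NormedAddCommGroup X] [NormedSpace ℂ X]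
    (L : Set (Submodule ℂ X)) (c : Submodule ℂ X → Submodule ℂ X) : Prop :=
  IsSubspaceLattice L ∧
  (∀ M ∈ L, ∀ N ∈ L, ∀ K ∈ L, M ⊓ cJoin2 N K = cJoin2 (M ⊓ N) (M ⊓ K)) ∧
  (∀ M ∈ L, ∀ N ∈ L, ∀ K ∈ L, cJoin2 M (N ⊓ K) = cJoin2 M N ⊓ cJoin2 M K) ∧
  (∀ M ∈ L, c M ∈ L ∧ M ⊓ c M = ⊥ ∧ cJoin2 M (c M) = ⊤) ∧
  (∀ M ∈ L, ∀ N ∈ L, M ⊓ N = ⊥ → cJoin2 M N = ⊤ → N = c M)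

/-- An atomic Boolean subspace lattice: every element is the join of the atoms below it. -/
def IsAtomicBooleanSubspaceLattice {X : Type*} [NormedAddCommGroup X] [NormedSpace ℂ X]
    (L : Set (Submodule ℂ X)) (c : Submodule ℂ X → Submodule ℂ X) : Prop :=
  IsBooleanSubspaceLattice L c ∧
  ∀ M ∈ L, M = cJoin {K | IsLatAtom L K ∧ K ≤ M}

/-- In an atomic Boolean subspace lattice: for an atom K, K₋ = K' = ⋁{L ∈ 𝔅ₐ : L ≠ K};
for a nonzero non-atom M, M₋ = X. -/
theorem atom_minus_eq_complement
    {X : Type*} [NormedAddCommGroup X] [NormedSpace ℂ X] [CompleteSpace X]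
    (L : Set (Submodule ℂ X)) (c : Submodule ℂ X → Submodule ℂ X)
    (hB : IsAtomicBooleanSubspaceLattice L c) :
    (∀ K, IsLatAtom L K →
      mMinus L K = c K ∧ c K = cJoin {P | IsLatAtom L P ∧ P ≠ K}) ∧
    (∀ M ∈ L, M ≠ ⊥ → ¬ IsLatAtom L M → mMinus L M = ⊤) := by
  obtain ⟨⟨⟨hClosed, hbot, htop, hSI⟩, hd1, hd2, hcomp, huniq⟩, hatomic⟩ := hB
  have hinf : ∀ M ∈ L, ∀ N ∈ L, M ⊓ N ∈ L := by
    intro M hM N hN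
    have h := (hSI {M, N} (by intro x hx; rcases hx with rfl | rfl <;> assumption)).2
    rwa [sInf_pair] at h
  have hclosedeq : ∀ A : Submodule ℂ X, IsClosed (A : Set X) → A.topologicalClosure = A :=
    fun A hA => le_antisymm (Submodule.topologicalClosure_minimal _ le_rfl hA)
      A.le_topologicalClosure
  have hdisj : ∀ M ∈ L, ∀ N ∈ L, M ⊓ N = ⊥ → N ≤ c M := by
    intro M hM N hN h0
    obtain ⟨hcM, hMc, hjc⟩ := hcomp M hM
    have hNc : IsClosed ((N ⊓ c M : Submodule ℂ X) : Set X) := by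
      rw [Submodule.coe_inf]; exact (hClosed N hN).inter (hClosed _ hcM)
    have hNM : N ⊓ M = ⊥ := by rw [inf_comm]; exact h0
    have key : N = N ⊓ c M := by
      calc N = N ⊓ ⊤ := (inf_top_eq N).symm
        _ = N ⊓ cJoin2 M (c M) := by rw [hjc]
        _ = cJoin2 (N ⊓ M) (N ⊓ c M) := hd1 N hN M hM (c M) hcM
        _ = cJoin2 ⊥ (N ⊓ c M) := by rw [hNM]
        _ = N ⊓ c M := by unfold cJoin2; rw [bot_sup_eq]; exact hclosedeq _ hNc
    rw [key]; exact inf_le_right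
  have hatominf : ∀ K, IsLatAtom L K → ∀ N ∈ L, ¬ K ≤ N → K ⊓ N = ⊥ := by
    intro K hK N hN hKN
    rcases hK.2.2.2 (K ⊓ N) (hinf K hK.1 N hN) inf_le_left with h | h
    · exact h
    · exact absurd (inf_eq_left.mp h) hKN
  have hKnotc : ∀ K, IsLatAtom L K → ¬ K ≤ c K := by
    intro K hK hle
    obtain ⟨hcK, hKc, hjK⟩ := hcomp K hK.1
    exact hK.2.1 (by rw [← hKc, inf_eq_left.mpr hle])
  have hatom1 : ∀ K, IsLatAtom L K → mMinus L K = c K := by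
    intro K hK
    obtain ⟨hcK, hKc, hjK⟩ := hcomp K hK.1
    apply le_antisymm
    · apply Submodule.topologicalClosure_minimal _ _ (hClosed _ hcK)
      apply sSup_le
      rintro N ⟨hN, hKN⟩
      exact hdisj K hK.1 N hN (hatominf K hK N hN hKN)
    · rw [hatomic (c K) hcK]
      apply Submodule.topologicalClosure_mono
      apply sSup_le_sSup
      rintro P ⟨hP, hPle⟩
      refine ⟨hP.1, fun hKP => hKnotc K hK (hKP.trans hPle)⟩
  have hatom2 : ∀ K, IsLatAtom L K → c K = cJoin {P | IsLatAtom L P ∧ P ≠ K} := by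
    intro K hK
    obtain ⟨hcK, hKc, hjK⟩ := hcomp K hK.1
    apply le_antisymm
    · rw [hatomic (c K) hcK]
      apply Submodule.topologicalClosure_mono
      apply sSup_le_sSup
      rintro P ⟨hP, hPle⟩
      exact ⟨hP, fun hPK => hKnotc K hK (hPK ▸ hPle)⟩
    · apply Submodule.topologicalClosure_minimal _ _ (hClosed _ hcK)
      apply sSup_le
      rintro P ⟨hP, hPK⟩
      have h0 : K ⊓ P = ⊥ := by
        rcases hK.2.2.2 (K ⊓ P) (hinf K hK.1 P hP.1) inf_le_left with h | h
        · exact h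
        · have hKP : K ≤ P := inf_eq_left.mp h
          rcases hP.2.2.2 K hK.1 hKP with h' | h'
          · exact absurd h' hK.2.1
          · exact absurd h'.symm hPK
      exact hdisj K hK.1 P hP.1 h0
  refine ⟨fun K hK => ⟨hatom1 K hK, hatom2 K hK⟩, ?_⟩
  intro M hM hMbot hMatom
  have htopeq := hatomic ⊤ htop
  have h1 : cJoin {K | IsLatAtom L K ∧ K ≤ ⊤} ≤ mMinus L M := by
    apply Submodule.topologicalClosure_mono
    apply sSup_le_sSup
    rintro P ⟨hP, -⟩
    refine ⟨hP.1, fun hMP => ?_⟩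
    rcases hP.2.2.2 M hM hMP with h | h
    · exact hMbot h
    · exact hMatom (by rw [h]; exact hP)
  exact le_antisymm le_top (htopeq ▸ h1)
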